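/- Let Λ be a set of nonnegative real numbers satisfying DCC. Consider the set Ω of all real numbers of the form a = 1 − 1/l + (1/l)·Σ_{s=1}^{k} n_s λ_s, where l ≥ 1 and k ≥ 0 are natural numbers, n_1,…,n_k are natural numbers, λ_1,…,λ_k ∈ Λ, and a ≤ 1 (equivalently Σ_{s} n_s λ_s ≤ 1). Then Ω satisfies DCC. (This is the arithmetic content of Proposition 4.5: the coefficients of the boundary divisor B_{S'} arising from generalized adjunction have exactly this form, with l a Cartier index, b_{k} ∈ Λ the coefficients of the boundary part and μ_j ∈ Λ the coefficients of the nef part; hence they lie in a DCC set Ω depending only on Λ.) -/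

import Mathlib

/-- A set of real numbers satisfies DCC if it contains no infinite strictly
decreasing sequence. -/
def SatisfiesDCC (S : Set ℝ) : Prop :=
  ¬ ∃ f : ℕ → ℝ, (∀ n, f n ∈ S) ∧ StrictAnti f

theorem dcc_adjunction_coeffs (Λ : Set ℝ) (h0 : ∀ a ∈ Λ, 0 ≤ a)
    (hΛ : SatisfiesDCC Λ) :
    SatisfiesDCC {a : ℝ | ∃ (l : ℕ), 1 ≤ l ∧ ∃ (k : ℕ) (n : Fin k → ℕ)
      (lam : Fin k → ℝ), (∀ s, lam s ∈ Λ) ∧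
      a = 1 - 1 / (l : ℝ) + (1 / (l : ℝ)) * ∑ s, (n s : ℝ) * lam s ∧ a ≤ 1} := by
  rintro ⟨f, hf, hanti⟩
  -- Λ is well-founded, hence so is the additive monoid it generates
  have hΛwf : Λ.IsWF := by
    rw [Set.isWF_iff_no_descending_seq]
    intro g hg hmem
    exact hΛ ⟨g, hmem, hg⟩
  have hTwf : (AddSubmonoid.closure Λ : Set ℝ).IsWF :=
    (hΛwf.isPWO.addSubmonoid_closure fun x hx => h0 x hx).isWF
  -- shift the sequence by one
  set f' : ℕ → ℝ := fun m => f (m + 1) with hf'def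
  have hanti' : StrictAnti f' := fun a b h => hanti (by omega)
  choose l hl k n lam hlam heq hle using fun m => hf (m + 1)
  set S : ℕ → ℝ := fun m => ∑ s, (n m s : ℝ) * lam m s with hSdef
  have hSmem : ∀ m, S m ∈ (AddSubmonoid.closure Λ : Set ℝ) := by
    intro m
    refine AddSubmonoid.sum_mem _ fun s _ => ?_
    have h' := (AddSubmonoid.closure Λ).nsmul_mem (AddSubmonoid.subset_closure (hlam m s)) (n m s)
    rwa [nsmul_eq_mul] at h'
  have hS0 : ∀ m, 0 ≤ S m := fun m =>
    Finset.sum_nonneg fun s _ => mul_nonneg (Nat.cast_nonneg _) (h0 _ (hlam m s))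
  have hlpos : ∀ m, (0:ℝ) < l m := fun m => by exact_mod_cast Nat.lt_of_lt_of_le Nat.zero_lt_one (hl m)
  have key : ∀ m, S m = (f' m - 1) * l m + 1 := by
    intro m
    have h := heq m
    have h0m := (hlpos m).ne'
    field_simp at h
    nlinarith [hlpos m]
  -- the positive gap
  have hf0le : f 0 ≤ 1 := by
    obtain ⟨_, _, _, _, _, _, _, h1⟩ := hf 0
    exact h1
  have hε : (0:ℝ) < 1 - f' 0 := by
    have := hanti (show 0 < 1 by norm_num)
    simp only [hf'def]
    linarith
  set ε : ℝ := 1 - f' 0 with hεdef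
  -- l is bounded
  have hlbd : ∀ m, (l m : ℝ) ≤ 1 / ε := by
    intro m
    have h1 : 1 - f' m ≥ ε := by
      have := hanti'.antitone (Nat.zero_le m)
      simp only [hεdef]; linarith
    have h2 : (1 - f' m) * l m = 1 - S m := by nlinarith [key m]
    have h3 : ε * l m ≤ 1 := by nlinarith [hS0 m, hlpos m]
    rw [le_div_iff₀ hε, mul_comm]
    exact h3
  set N : ℕ := ⌈1 / ε⌉₊ with hN
  have hlN : ∀ m, l m < N + 1 := by
    intro m
    have : (l m : ℝ) ≤ (N : ℝ) := (hlbd m).trans (Nat.le_ceil _)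
    have : l m ≤ N := by exact_mod_cast this
    omega
  -- pigeonhole
  set L : ℕ → Fin (N + 1) := fun m => ⟨l m, hlN m⟩ with hL
  obtain ⟨b, hb⟩ := Finite.exists_infinite_fiber L
  have hbset : (L ⁻¹' {b}).Infinite := Set.infinite_coe_iff.mp hb
  set p : ℕ → Prop := fun m => l m = b.val with hp
  have hpinf : (setOf p).Infinite := by
    refine hbset.mono fun m hm => ?_
    have : L m = b := hm
    exact (show l m = b.val by simpa [hL, Fin.ext_iff] using this)
  set φ : ℕ → ℕ := Nat.nth p with hφ
  have hφmono : StrictMono φ := Nat.nth_strictMono hpinf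
  have hφp : ∀ j, l (φ j) = b.val := fun j => Nat.nth_mem_of_infinite hpinf j
  have hbpos : (0:ℝ) < b.val := by
    have := hl (φ 0)
    rw [hφp 0] at this
    exact_mod_cast Nat.lt_of_lt_of_le Nat.zero_lt_one this
  -- strictly decreasing sequence in the closure
  have hGanti : StrictAnti (fun j => S (φ j)) := by
    intro i j hij
    have hfij : f' (φ j) < f' (φ i) := hanti' (hφmono hij)
    have ki := key (φ i); have kj := key (φ j)
    rw [hφp i] at ki; rw [hφp j] at kj
    nlinarith
  rw [Set.isWF_iff_no_descending_seq] at hTwf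
  exact hTwf _ hGanti fun j => hSmem (φ j)
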